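/- For 1 ≤ k < n, the quantities f_{k,n} satisfy the recursion f_{k+1,n} = q^{k-1}(q-1)·(f_{k,n}·[n-k]_q − f_{k,n-1}), and the initial values are f_{1,n} = q^{n-1} − 1. -/

import Mathlib

/-- `[a]_q = 1 + q + ⋯ + q^(a-1)`. -/
def qNum (q a : ℕ) : ℕ := ∑ i ∈ Finset.range a, q ^ i

/-- Number of `k × n` matrices over `F` of rank `k` with all diagonal entries zero. -/
noncomputable def fcount (F : Type) [Field F] [Fintype F] (k n : ℕ) : ℕ :=
  Nat.card {A : Matrix (Fin k) (Fin n) F //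
    A.rank = k ∧ ∀ (i : Fin k) (j : Fin n), (i : ℕ) = (j : ℕ) → A i j = 0}


open Matrix Submodule

set_option linter.unusedSectionVars false

variable {F : Type} [Field F] [Fintype F]

lemma rank_rows_iff {m n : ℕ} (A : Matrix (Fin m) (Fin n) F) :
    A.rank = m ↔ LinearIndependent F A := by
  rw [A.rank_eq_finrank_span_row]
  have := linearIndependent_iff_card_eq_finrank_span (R := F) (b := A.row)
  rw [Set.finrank, Fintype.card_fin, eq_comm] at this
  exact this.symm

lemma card_H (n : ℕ) (p : Fin n) :
    Nat.card (LinearMap.ker (LinearMap.proj (R := F) (φ := fun _ : Fin n => F) p)) =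
      Fintype.card F ^ (n - 1) := by
  have : Fintype (LinearMap.ker (LinearMap.proj (R := F) (φ := fun _ : Fin n => F) p)) :=
    Fintype.ofFinite _
  rw [Nat.card_eq_fintype_card, Module.card_eq_pow_finrank (K := F)]
  congr 1
  have h1 : LinearMap.range (LinearMap.proj (R := F) (φ := fun _ : Fin n => F) p) = ⊤ := by
    rw [LinearMap.range_eq_top]
    intro x
    exact ⟨fun _ => x, rfl⟩
  have h2 := LinearMap.finrank_range_add_finrank_ker
    (LinearMap.proj (R := F) (φ := fun _ : Fin n => F) p)
  rw [h1, finrank_top, Module.finrank_self, Module.finrank_pi, Fintype.card_fin] at h2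
  have : 1 ≤ n := Fin.pos p
  omega

lemma card_fiber (n : ℕ) (p : Fin n) (W : Submodule F (Fin n → F)) :
    Nat.card {v : Fin n → F // v p = 0 ∧ v ∉ W} +
      Nat.card (W ⊓ LinearMap.ker (LinearMap.proj (R := F) (φ := fun _ : Fin n => F) p) :
        Submodule F (Fin n → F)) = Fintype.card F ^ (n - 1) := by
  classical
  set H := LinearMap.ker (LinearMap.proj (R := F) (φ := fun _ : Fin n => F) p) with hH
  have e1 : {v : Fin n → F // v p = 0 ∧ v ∉ W} ≃ {x : H // x.1 ∉ W} :=
    { toFun := fun v => ⟨⟨v.1, v.2.1⟩, v.2.2⟩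
      invFun := fun x => ⟨x.1.1, x.1.2, x.2⟩
      left_inv := fun v => rfl
      right_inv := fun x => rfl }
  have e2 : {x : H // x.1 ∈ W} ≃ (W ⊓ H : Submodule F (Fin n → F)) :=
    { toFun := fun x => ⟨x.1.1, x.2, x.1.2⟩
      invFun := fun y => ⟨⟨y.1, y.2.2⟩, y.2.1⟩
      left_inv := fun x => rfl
      right_inv := fun y => rfl }
  rw [Nat.card_congr e1, ← Nat.card_congr e2, ← card_H n p]
  have : Fintype H := Fintype.ofFinite _
  have hc := Fintype.card_congr (Equiv.sumCompl (fun x : H => x.1 ∈ W))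
  rw [Fintype.card_sum] at hc
  simp only [← Nat.card_eq_fintype_card] at hc
  simp only [hH] at hc ⊢
  omega

lemma card_inf_le (n k : ℕ) (p : Fin n) (W : Submodule F (Fin n → F))
    (hW : Module.finrank F W = k)
    (hle : W ≤ LinearMap.ker (LinearMap.proj (R := F) (φ := fun _ : Fin n => F) p)) :
    Nat.card (W ⊓ LinearMap.ker (LinearMap.proj (R := F) (φ := fun _ : Fin n => F) p) :
        Submodule F (Fin n → F)) = Fintype.card F ^ k := by
  rw [inf_eq_left.mpr hle]
  have : Fintype W := Fintype.ofFinite _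
  rw [Nat.card_eq_fintype_card, Module.card_eq_pow_finrank (K := F), hW]

lemma card_inf_not_le (n k : ℕ) (p : Fin n) (W : Submodule F (Fin n → F))
    (hW : Module.finrank F W = k)
    (hle : ¬ W ≤ LinearMap.ker (LinearMap.proj (R := F) (φ := fun _ : Fin n => F) p)) :
    Nat.card (W ⊓ LinearMap.ker (LinearMap.proj (R := F) (φ := fun _ : Fin n => F) p) :
        Submodule F (Fin n → F)) = Fintype.card F ^ (k - 1) := by
  classical
  set H := LinearMap.ker (LinearMap.proj (R := F) (φ := fun _ : Fin n => F) p) with hH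
  set φ : W →ₗ[F] F := (LinearMap.proj (R := F) (φ := fun _ : Fin n => F) p).comp W.subtype
    with hφ
  have e : (W ⊓ H : Submodule F (Fin n → F)) ≃ LinearMap.ker φ :=
    { toFun := fun y => ⟨⟨y.1, y.2.1⟩, y.2.2⟩
      invFun := fun x => ⟨x.1.1, x.1.2, x.2⟩
      left_inv := fun y => rfl
      right_inv := fun x => rfl }
  rw [Nat.card_congr e]
  have hrange : LinearMap.range φ = ⊤ := by
    rcases Ideal.eq_bot_or_top (LinearMap.range φ) with h | h
    · exact absurd (fun x hx => by
        have : φ ⟨x, hx⟩ ∈ LinearMap.range φ := ⟨⟨x, hx⟩, rfl⟩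
        rw [h] at this
        exact LinearMap.mem_ker.mpr ((Submodule.mem_bot F).mp this)) hle
    · exact h
  have h2 := LinearMap.finrank_range_add_finrank_ker φ
  rw [hrange, finrank_top, Module.finrank_self, hW] at h2
  have : Fintype (LinearMap.ker φ) := Fintype.ofFinite _
  rw [Nat.card_eq_fintype_card, Module.card_eq_pow_finrank (K := F)]
  congr 1
  omega

lemma rank_insert_cols {k m : ℕ} (p : Fin (m + 1)) (B : Matrix (Fin k) (Fin (m + 1)) F)
    (C : Matrix (Fin k) (Fin m) F) (h : ∀ i, B i = p.insertNth 0 (C i)) :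
    B.rank = C.rank := by
  rw [Matrix.rank_eq_finrank_span_cols, Matrix.rank_eq_finrank_span_cols]
  have hr : Set.range Bᵀ = insert 0 (Set.range Cᵀ) := by
    ext x
    constructor
    · rintro ⟨j, rfl⟩
      by_cases hj : j = p
      · subst hj
        left
        funext i
        simp [Matrix.transpose_apply, h i, Fin.insertNth_apply_same]
      · obtain ⟨j', rfl⟩ := Fin.exists_succAbove_eq hj
        right
        exact ⟨j', by funext i; simp [Matrix.transpose_apply, h i,
          Fin.insertNth_apply_succAbove]⟩
    · rintro (rfl | ⟨j', rfl⟩)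
      · exact ⟨p, by funext i; simp [Matrix.transpose_apply, h i, Fin.insertNth_apply_same]⟩
      · exact ⟨p.succAbove j', by funext i; simp [Matrix.transpose_apply, h i,
          Fin.insertNth_apply_succAbove]⟩
  show Module.finrank F (span F (Set.range Bᵀ)) = Module.finrank F (span F (Set.range Cᵀ))
  rw [hr, Submodule.span_insert_zero]

open scoped Classical in
lemma card_step (k m : ℕ) (hk : 1 ≤ k) (hkm : k < m + 1) :
    fcount F (k + 1) (m + 1)
      = ∑ B : {B : Matrix (Fin k) (Fin (m + 1)) F //
            B.rank = k ∧ ∀ (i : Fin k) (j : Fin (m + 1)), (i : ℕ) = (j : ℕ) → B i j = 0},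
          Nat.card {v : Fin (m + 1) → F // v ⟨k, hkm⟩ = 0 ∧
            v ∉ Submodule.span F (Set.range (B.1 : Fin k → Fin (m + 1) → F))} := by
  classical
  set p : Fin (m + 1) := ⟨k, hkm⟩ with hp
  set T := {B : Matrix (Fin k) (Fin (m + 1)) F //
      B.rank = k ∧ ∀ (i : Fin k) (j : Fin (m + 1)), (i : ℕ) = (j : ℕ) → B i j = 0} with hT
  set S := {A : Matrix (Fin (k + 1)) (Fin (m + 1)) F //
      A.rank = k + 1 ∧ ∀ (i : Fin (k + 1)) (j : Fin (m + 1)), (i : ℕ) = (j : ℕ) → A i j = 0}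
    with hS
  have hsnoc : ∀ A : S, LinearIndependent F
      (Fin.snoc (Fin.init (A.1 : Fin (k + 1) → Fin (m + 1) → F)) (A.1 (Fin.last k)) :
        Fin (k + 1) → Fin (m + 1) → F) := by
    intro A
    have e : (Fin.snoc (Fin.init (A.1 : Fin (k + 1) → Fin (m + 1) → F)) (A.1 (Fin.last k)) :
        Fin (k + 1) → Fin (m + 1) → F) = (A.1 : Fin (k + 1) → Fin (m + 1) → F) :=
      Fin.snoc_init_self _
    rw [e]
    exact (rank_rows_iff A.1).mp A.2.1
  let π : S → T := fun A =>
    ⟨(Fin.init (A.1 : Fin (k + 1) → Fin (m + 1) → F) : Matrix (Fin k) (Fin (m + 1)) F),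
      (rank_rows_iff _).mpr (linearIndependent_fin_snoc.mp (hsnoc A)).1,
      fun i j hij => A.2.2 i.castSucc j (by simpa using hij)⟩
  have key : ∀ B : T, Nat.card {A : S // π A = B} =
      Nat.card {v : Fin (m + 1) → F // v p = 0 ∧
        v ∉ Submodule.span F (Set.range (B.1 : Fin k → Fin (m + 1) → F))} := by
    intro B
    refine Nat.card_congr ?_
    refine
      { toFun := fun A => ⟨A.1.1 (Fin.last k), ?_, ?_⟩
        invFun := fun v =>
          ⟨⟨(Fin.snoc (B.1 : Fin k → Fin (m + 1) → F) v.1 : Matrix (Fin (k + 1)) (Fin (m + 1)) F), ?_, ?_⟩, ?_⟩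
        left_inv := ?_
        right_inv := ?_ }
    · exact A.1.2.2 (Fin.last k) p (by simp [hp])
    · have h2 := (linearIndependent_fin_snoc.mp (hsnoc A.1)).2
      have hB : Fin.init (A.1.1 : Fin (k + 1) → Fin (m + 1) → F)
          = (B.1 : Fin k → Fin (m + 1) → F) := congrArg Subtype.val A.2
      rwa [hB] at h2
    · refine (rank_rows_iff _).mpr (linearIndependent_fin_snoc.mpr ⟨?_, ?_⟩)
      · exact (rank_rows_iff B.1).mp B.2.1
      · exact v.2.2
    · intro i j hij
      revert hij
      refine Fin.lastCases ?_ ?_ i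
      · intro hij'
        have : j = p := Fin.ext (by simpa [hp] using hij'.symm)
        subst this
        exact (congrFun (Fin.snoc_last (α := fun _ : Fin (k + 1) => Fin (m + 1) → F)
          (p := (B.1 : Fin k → Fin (m + 1) → F)) (x := v.1)) p).trans v.2.1
      · intro i' hij'
        have := B.2.2 i' j (by simpa using hij')
        exact (congrFun (Fin.snoc_castSucc (α := fun _ : Fin (k + 1) => Fin (m + 1) → F)
          (p := (B.1 : Fin k → Fin (m + 1) → F)) (x := v.1) (i := i')) j).trans this
    · refine Subtype.ext (Fin.init_snoc (α := fun _ : Fin (k + 1) => Fin (m + 1) → F)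
        (p := (B.1 : Fin k → Fin (m + 1) → F)) (x := v.1))
    · rintro ⟨A, hA⟩
      have hB : Fin.init (A.1 : Fin (k + 1) → Fin (m + 1) → F)
          = (B.1 : Fin k → Fin (m + 1) → F) := congrArg Subtype.val hA
      refine Subtype.ext (Subtype.ext ?_)
      show (Fin.snoc (B.1 : Fin k → Fin (m + 1) → F) (A.1 (Fin.last k)) :
        Matrix (Fin (k + 1)) (Fin (m + 1)) F) = A.1
      rw [← hB]
      exact Fin.snoc_init_self _
    · rintro ⟨v, hv⟩
      refine Subtype.ext ?_
      exact Fin.snoc_last (α := fun _ : Fin (k + 1) => Fin (m + 1) → F)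
        (p := (B.1 : Fin k → Fin (m + 1) → F)) (x := v)
  rw [show fcount F (k + 1) (m + 1) = Nat.card S from rfl]
  rw [Nat.card_eq_fintype_card,
    Fintype.card_congr (Equiv.sigmaFiberEquiv π).symm, Fintype.card_sigma]
  refine Finset.sum_congr rfl fun B _ => ?_
  rw [← Nat.card_eq_fintype_card, key B]

lemma insertNth_removeNth_zero {m : ℕ} (p : Fin (m + 1)) (f : Fin (m + 1) → F)
    (h : f p = 0) : p.insertNth 0 (p.removeNth f) = f := by
  conv_rhs => rw [← Fin.insertNth_self_removeNth p f]
  rw [h]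

open scoped Classical in
lemma card_colzero (k m : ℕ) (hkm : k < m + 1) :
    Nat.card {B : {B : Matrix (Fin k) (Fin (m + 1)) F //
        B.rank = k ∧ ∀ (i : Fin k) (j : Fin (m + 1)), (i : ℕ) = (j : ℕ) → B i j = 0} //
        ∀ i, (B.1 : Fin k → Fin (m + 1) → F) i ⟨k, hkm⟩ = 0}
      = fcount F k m := by
  set p : Fin (m + 1) := ⟨k, hkm⟩ with hp
  refine Nat.card_congr ?_
  refine
    { toFun := fun B => ⟨(fun i => p.removeNth ((B.1.1 : Fin k → Fin (m + 1) → F) i) :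
        Matrix (Fin k) (Fin m) F), ?_, ?_⟩
      invFun := fun C => ⟨⟨(fun i => p.insertNth 0 ((C.1 : Fin k → Fin m → F) i) :
        Matrix (Fin k) (Fin (m + 1)) F), ?_, ?_⟩, ?_⟩
      left_inv := ?_
      right_inv := ?_ }
  · -- rank of removeNth
    have h : ∀ i, (B.1.1 : Fin k → Fin (m + 1) → F) i
        = p.insertNth 0 (p.removeNth ((B.1.1 : Fin k → Fin (m + 1) → F) i)) := by
      intro i
      conv_lhs => rw [← Fin.insertNth_self_removeNth p ((B.1.1 : _) i)]
      rw [B.2 i]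
    exact (rank_insert_cols p B.1.1 _ h).symm.trans B.1.2.1
  · -- diag of removeNth
    intro i j hij
    show (B.1.1 : Fin k → Fin (m + 1) → F) i (p.succAbove j) = 0
    have hlt : j.castSucc < p := by
      have h3 := i.2
      have h4 : (j.castSucc : ℕ) = (j : ℕ) := rfl
      rw [Fin.lt_def, h4, ← hij]
      exact h3
    rw [Fin.succAbove_of_castSucc_lt p j hlt]
    exact B.1.2.2 i j.castSucc (by simp [hij])
  · -- rank of insertNth
    exact (rank_insert_cols p _ C.1 (fun i => rfl)).trans C.2.1
  · -- diag of insertNth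
    intro i j hij
    beta_reduce
    have hjp : j ≠ p := by
      intro h
      have := i.2
      rw [h] at hij
      simp [hp] at hij
      omega
    obtain ⟨j', rfl⟩ := Fin.exists_succAbove_eq hjp
    rw [Fin.insertNth_apply_succAbove]
    rcases lt_or_ge j'.castSucc p with hlt | hle
    · have hc := Fin.succAbove_of_castSucc_lt p j' hlt
      refine C.2.2 i j' ?_
      rw [hij, hc]
      simp
    · exfalso
      have hc : p.succAbove j' = j'.succ := Fin.succAbove_of_le_castSucc p j' hle
      have h1 : (p : ℕ) ≤ (j' : ℕ) := by simpa [Fin.le_def] using hle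
      have h2 : (p.succAbove j' : ℕ) = (j' : ℕ) + 1 := by rw [hc]; simp
      have h3 : (i : ℕ) < k := i.2
      simp [hp] at h1
      omega
  · -- column zero
    intro i
    beta_reduce
    exact Fin.insertNth_apply_same (α := fun _ : Fin (m + 1) => F) p 0 _
  · -- left_inv
    rintro ⟨B, hcol⟩
    refine Subtype.ext (Subtype.ext ?_)
    funext i
    beta_reduce
    exact insertNth_removeNth_zero p _ (hcol i)
  · -- right_inv
    rintro ⟨C, hC⟩
    refine Subtype.ext ?_
    funext i
    beta_reduce
    exact Fin.removeNth_insertNth (α := fun _ : Fin (m + 1) => F) p 0 _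

open scoped Classical in
lemma main_step (k m : ℕ) (hk : 1 ≤ k) (hkm : k < m + 1) :
    (fcount F (k + 1) (m + 1) : ℤ)
      = (fcount F k (m + 1) : ℤ) * (Fintype.card F : ℤ) ^ m
        - (fcount F k m : ℤ) * (Fintype.card F : ℤ) ^ k
        - ((fcount F k (m + 1) : ℤ) - (fcount F k m : ℤ)) * (Fintype.card F : ℤ) ^ (k - 1) := by
  classical
  set p : Fin (m + 1) := ⟨k, hkm⟩ with hp
  set T := {B : Matrix (Fin k) (Fin (m + 1)) F //
      B.rank = k ∧ ∀ (i : Fin k) (j : Fin (m + 1)), (i : ℕ) = (j : ℕ) → B i j = 0} with hT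
  have hcs := card_step (F := F) k m hk hkm
  have hfib : ∀ B : T,
      (Nat.card {v : Fin (m + 1) → F // v p = 0 ∧
        v ∉ Submodule.span F (Set.range (B.1 : Fin k → Fin (m + 1) → F))} : ℤ)
      = (Fintype.card F : ℤ) ^ m -
        (if (∀ i, (B.1 : Fin k → Fin (m + 1) → F) i p = 0) then (Fintype.card F : ℤ) ^ k
          else (Fintype.card F : ℤ) ^ (k - 1)) := by
    intro B
    set W := Submodule.span F (Set.range (B.1 : Fin k → Fin (m + 1) → F)) with hW
    have hWr : Module.finrank F W = k := by
      rw [hW]; refine (Matrix.rank_eq_finrank_span_row B.1).symm.trans ?_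
      exact B.2.1
    have h1 := card_fiber (m + 1) p W
    have hm : m + 1 - 1 = m := rfl
    rw [hm] at h1
    by_cases hcol : ∀ i, (B.1 : Fin k → Fin (m + 1) → F) i p = 0
    · have hle : W ≤ LinearMap.ker (LinearMap.proj (R := F) (φ := fun _ : Fin (m + 1) => F) p) := by
        rw [hW, Submodule.span_le]
        rintro x ⟨i, rfl⟩
        exact LinearMap.mem_ker.mpr (hcol i)
      have h2 := card_inf_le (m + 1) k p W hWr hle
      rw [if_pos hcol]
      rw [h2] at h1
      have h3 := congrArg (Nat.cast : ℕ → ℤ) h1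
      push_cast at h3
      linarith only [h3]
    · have hle : ¬ W ≤ LinearMap.ker (LinearMap.proj (R := F) (φ := fun _ : Fin (m + 1) => F) p) := by
        intro hle
        refine hcol fun i => ?_
        have : (B.1 : Fin k → Fin (m + 1) → F) i ∈ W :=
          Submodule.subset_span (Set.mem_range_self i)
        exact LinearMap.mem_ker.mp (hle this)
      have h2 := card_inf_not_le (m + 1) k p W hWr hle
      rw [if_neg hcol]
      rw [h2] at h1
      have h3 := congrArg (Nat.cast : ℕ → ℤ) h1
      push_cast at h3
      linarith only [h3]
  have hNsum : (fcount F (k + 1) (m + 1) : ℤ)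
      = ∑ B : T, ((Fintype.card F : ℤ) ^ m -
          (if (∀ i, (B.1 : Fin k → Fin (m + 1) → F) i p = 0) then (Fintype.card F : ℤ) ^ k
            else (Fintype.card F : ℤ) ^ (k - 1))) := by
    rw [hcs]
    push_cast
    exact Finset.sum_congr rfl fun B _ => hfib B
  rw [hNsum, Finset.sum_sub_distrib, Finset.sum_const, Finset.sum_ite, Finset.sum_const,
    Finset.sum_const]
  have hcard : (((Finset.univ : Finset T)).card : ℤ) = (fcount F k (m + 1) : ℤ) := by
    rw [Finset.card_univ, ← Nat.card_eq_fintype_card]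
    rfl
  have hfilter : (((Finset.univ : Finset T).filter
      (fun B : T => ∀ i, (B.1 : Fin k → Fin (m + 1) → F) i p = 0)).card : ℤ)
      = (fcount F k m : ℤ) := by
    rw [← Fintype.card_subtype, ← Nat.card_eq_fintype_card]
    exact_mod_cast congrArg (Nat.cast : ℕ → ℤ) (card_colzero k m hkm)
  have hsplit := Finset.card_filter_add_card_filter_not
    (s := (Finset.univ : Finset T))
    (p := fun B : T => ∀ i, (B.1 : Fin k → Fin (m + 1) → F) i p = 0)
  have hsplit' := congrArg (Nat.cast : ℕ → ℤ) hsplit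
  push_cast at hsplit'
  rw [Finset.card_univ, ← Nat.card_eq_fintype_card] at hsplit'
  have hN : ((Nat.card T : ℕ) : ℤ) = (fcount F k (m + 1) : ℤ) := by rfl
  simp only [nsmul_eq_mul]
  rw [hfilter] at hsplit' ⊢
  rw [hcard]
  rw [hN] at hsplit'
  have hneg : (((Finset.univ : Finset T).filter
      (fun a : T => ¬ ∀ i, (a.1 : Fin k → Fin (m + 1) → F) i p = 0)).card : ℤ)
      = (fcount F k (m + 1) : ℤ) - (fcount F k m : ℤ) := by linarith only [hsplit']
  rw [hneg]
  ring

lemma base_case (m : ℕ) :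
    (fcount F 1 (m + 1) : ℤ) = (Fintype.card F : ℤ) ^ m - 1 := by
  classical
  have hequiv : {A : Matrix (Fin 1) (Fin (m + 1)) F //
      A.rank = 1 ∧ ∀ (i : Fin 1) (j : Fin (m + 1)), (i : ℕ) = (j : ℕ) → A i j = 0}
      ≃ {v : Fin (m + 1) → F // v 0 = 0 ∧ v ∉ (⊥ : Submodule F (Fin (m + 1) → F))} :=
    { toFun := fun A => ⟨A.1 0, A.2.2 0 0 rfl, by
        simp only [Submodule.mem_bot]
        exact ((rank_rows_iff A.1).mp A.2.1).ne_zero 0⟩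
      invFun := fun v => ⟨(fun _ => v.1 : Matrix (Fin 1) (Fin (m + 1)) F), by
        refine (rank_rows_iff _).mpr (linearIndependent_unique_iff.mpr ?_)
        simpa using v.2.2, by
        intro i j hij
        have hj : j = 0 := Fin.ext (by simpa using hij.symm)
        subst hj
        exact v.2.1⟩
      left_inv := fun A => Subtype.ext (by
        funext i j
        have : i = 0 := Subsingleton.elim _ _
        subst this
        rfl)
      right_inv := fun v => rfl }
  have h1 := card_fiber (m + 1) (0 : Fin (m + 1)) (⊥ : Submodule F (Fin (m + 1) → F))
  rw [bot_inf_eq] at h1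
  have hbot : Nat.card (⊥ : Submodule F (Fin (m + 1) → F)) = 1 := by
    simp
  rw [hbot] at h1
  have h2 : fcount F 1 (m + 1)
      = Nat.card {v : Fin (m + 1) → F // v 0 = 0 ∧ v ∉ (⊥ : Submodule F (Fin (m + 1) → F))} :=
    Nat.card_congr hequiv
  have hm : m + 1 - 1 = m := rfl
  rw [hm] at h1
  rw [h2]
  have h3 := congrArg (Nat.cast : ℕ → ℤ) h1
  push_cast at h3
  linarith only [h3]

theorem stmt0 (F : Type) [Field F] [Fintype F] (q : ℕ) (hq : Fintype.card F = q) :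
    (∀ k n : ℕ, 1 ≤ k → k < n →
      (fcount F (k + 1) n : ℤ) =
        (q : ℤ) ^ (k - 1) * ((q : ℤ) - 1) *
          ((fcount F k n : ℤ) * (qNum q (n - k) : ℤ) - (fcount F k (n - 1) : ℤ))) ∧
    (∀ n : ℕ, 1 ≤ n → (fcount F 1 n : ℤ) = (q : ℤ) ^ (n - 1) - 1) := by
  subst hq
  constructor
  · intro k n hk hkn
    obtain ⟨m, rfl⟩ : ∃ m, n = m + 1 := ⟨n - 1, by omega⟩
    have hkm : k < m + 1 := hkn
    have hms := main_step (F := F) k m hk hkm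
    have hgeom : ((Fintype.card F : ℤ) - 1) * (qNum (Fintype.card F) (m + 1 - k) : ℤ)
        = (Fintype.card F : ℤ) ^ (m + 1 - k) - 1 := by
      unfold qNum
      push_cast
      rw [mul_comm]
      exact geom_sum_mul (Fintype.card F : ℤ) (m + 1 - k)
    have h1 : (Fintype.card F : ℤ) ^ (k - 1) * (Fintype.card F : ℤ) ^ (m + 1 - k)
        = (Fintype.card F : ℤ) ^ m := by
      rw [← pow_add]
      congr 1
      omega
    have h2 : (Fintype.card F : ℤ) ^ (k - 1) * (Fintype.card F : ℤ)
        = (Fintype.card F : ℤ) ^ k := by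
      rw [← pow_succ]
      congr 1
      omega
    have hm1 : m + 1 - 1 = m := rfl
    rw [hm1, hms]
    linear_combination (-(fcount F k (m + 1) : ℤ)) * h1 + (fcount F k m : ℤ) * h2 +
      (-((Fintype.card F : ℤ) ^ (k - 1) * (fcount F k (m + 1) : ℤ))) * hgeom
  · intro n hn
    obtain ⟨m, rfl⟩ : ∃ m, n = m + 1 := ⟨n - 1, by omega⟩
    have hm1 : m + 1 - 1 = m := rfl
    rw [hm1]
    exact base_case (F := F) m
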